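/- Let F be a finite field with |F| = q and let n ≥ 2. Then |P_n(F)| = (q^{(n−1)²} − |P_{n−1}(F)|) q^{2(n−1)} + q Σ_{r=0}^{n−1} |N^{(r)}_{n−1}(F)| · |V^{(r)}_{n−1}(F)|, where N^{(r)}_{n−1}(F) = {X ∈ M_{n−1}(F) : per X = 0 and rank(X̂) = r} and |V^{(r)}_{n−1}(F)| = q^{2(n−1−r)}((q^r − 1) q^{r−1} + q^r). -/

import Mathlib

/-- The permanental compound `X̂` of a square matrix `X`: the `(i,j)` entry is the
permanent of the submatrix of `X` obtained by deleting row `i` and column `j`. -/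
def Matrix.permCompound {m : ℕ} {F : Type*} [CommRing F]
    (X : Matrix (Fin (m + 1)) (Fin (m + 1)) F) : Matrix (Fin (m + 1)) (Fin (m + 1)) F :=
  Matrix.of fun i j => (X.submatrix i.succAbove j.succAbove).permanent

/-- The cardinality `q^{2(k−r)}((qʳ − 1) q^{r−1} + qʳ)` of
`{(x,y) ∈ Fᵏ × Fᵏ : xᵀ A y = 0}` for a matrix `A` of rank `r` over a field with `q`
elements. -/
def bilinearZeroCount (q k r : ℕ) : ℕ :=
  q ^ (2 * (k - r)) * ((q ^ r - 1) * q ^ (r - 1) + q ^ r)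

open Equiv Finset Matrix

section PermanentExpansion

variable {R : Type*} [CommSemiring R]

theorem Matrix.permanent_succ_column_zero' {n : ℕ} (A : Matrix (Fin (n+1)) (Fin (n+1)) R) :
    A.permanent = ∑ i : Fin (n+1), A i 0 * (A.submatrix i.succAbove Fin.succ).permanent := by
  rw [Matrix.permanent, Finset.univ_perm_fin_succ, ← Finset.univ_product_univ, Finset.sum_map,
    Finset.sum_product]
  refine Finset.sum_congr rfl fun p _ => ?_
  have h1 : ∀ σ : Perm (Fin n), (∏ i', A (Equiv.Perm.decomposeFin.symm (p, σ) i') i')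
      = A p 0 * ∏ x, A (Equiv.swap 0 p (σ x).succ) x.succ := by
    intro σ
    rw [Fin.prod_univ_succ]
    simp
  simp only [Equiv.toEmbedding_apply, h1, ← Finset.mul_sum]
  congr 1
  have h2 : (∑ σ : Perm (Fin n), ∏ x, A (Equiv.swap 0 p (σ x).succ) x.succ)
      = (A.submatrix (fun x => Equiv.swap 0 p x.succ) Fin.succ).permanent := rfl
  rw [h2]
  refine Fin.cases ?_ (fun i => ?_) p
  · congr 1
  · have : (A.submatrix (fun x => Equiv.swap 0 i.succ x.succ) Fin.succ)
        = (A.submatrix i.succ.succAbove Fin.succ).submatrix i.cycleRange id := by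
      ext a b
      simp [Fin.succAbove_cycleRange]
    rw [this, Matrix.permanent_permute_cols]

theorem Matrix.permanent_succ_row_zero' {n : ℕ} (A : Matrix (Fin (n+1)) (Fin (n+1)) R) :
    A.permanent = ∑ j : Fin (n+1), A 0 j * (A.submatrix Fin.succ j.succAbove).permanent := by
  rw [← permanent_transpose A, Matrix.permanent_succ_column_zero']
  refine Finset.sum_congr rfl fun j _ => ?_
  rw [← permanent_transpose]
  simp [transpose_submatrix]

end PermanentExpansion

theorem keyExp {m : ℕ} {F : Type*} [CommRing F] (A : Matrix (Fin (m+2)) (Fin (m+2)) F) :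
    A.permanent = A 0 0 * (A.submatrix Fin.succ Fin.succ).permanent +
      (fun i => A i.succ 0) ⬝ᵥ
        ((A.submatrix Fin.succ Fin.succ).permCompound *ᵥ (fun j => A 0 j.succ)) := by
  rw [Matrix.permanent_succ_row_zero', Fin.sum_univ_succ]
  congr 1
  have hj : ∀ j : Fin (m+1), (A.submatrix Fin.succ (j.succ).succAbove).permanent
      = ∑ i, A i.succ 0 * ((A.submatrix Fin.succ Fin.succ).permCompound i j) := by
    intro j
    rw [Matrix.permanent_succ_column_zero']
    refine Finset.sum_congr rfl fun i _ => ?_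
    refine congrArg₂ (· * ·) ?_ ?_
    · simp
    · simp only [Matrix.permCompound, Matrix.of_apply]
      congr 1
      ext a b
      simp [Fin.succ_succAbove_succ]
  simp only [hj]
  simp only [dotProduct, Matrix.mulVec, Finset.mul_sum]
  rw [Finset.sum_comm]
  exact Finset.sum_congr rfl fun j _ => Finset.sum_congr rfl fun i _ => by ring

/-- Decomposition of an `(k+1) × (k+1)` matrix into the lower-right `k × k` block, the
first row (minus corner), the first column (minus corner), and the corner entry. -/
def blockEquiv (k : ℕ) (F : Type) :
    Matrix (Fin (k+1)) (Fin (k+1)) F ≃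
      Matrix (Fin k) (Fin k) F × ((Fin k → F) × (Fin k → F) × F) where
  toFun A := (A.submatrix Fin.succ Fin.succ,
    fun j => A 0 j.succ, fun i => A i.succ 0, A 0 0)
  invFun t := Matrix.of
    (Fin.cons (Fin.cons t.2.2.2 t.2.1) (fun i => Fin.cons (t.2.2.1 i) (t.1 i)))
  left_inv A := by
    funext i j
    refine Fin.cases ?_ (fun i' => ?_) i <;> refine Fin.cases ?_ (fun j' => ?_) j <;>
      simp [Matrix.of_apply]
  right_inv t := by
    obtain ⟨X, x, y, a⟩ := t
    refine Prod.ext ?_ (Prod.ext ?_ (Prod.ext ?_ ?_))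
    · ext i j; simp
    · funext j; simp
    · funext i; simp
    · simp

section Counting

variable {F : Type} [Field F] [Fintype F]

theorem card_mulVec_ker {a k : ℕ} (B : Matrix (Fin a) (Fin k) F) :
    Nat.card {x : Fin k → F // B *ᵥ x = 0} = Fintype.card F ^ (k - B.rank) := by
  have h1 : Nat.card {x : Fin k → F // B *ᵥ x = 0}
      = Nat.card (LinearMap.ker B.mulVecLin) := by
    apply Nat.card_congr
    exact Equiv.subtypeEquivRight (fun x => by simp [LinearMap.mem_ker])
  haveI : Fintype (LinearMap.ker B.mulVecLin) := Fintype.ofFinite _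
  rw [h1, Nat.card_eq_fintype_card, Module.card_eq_pow_finrank (K := F)]
  congr 1
  have h2 := LinearMap.finrank_range_add_finrank_ker B.mulVecLin
  have h3 : B.rank = Module.finrank F (LinearMap.range B.mulVecLin) := rfl
  simp only [Module.finrank_pi, Fintype.card_fin] at h2
  omega

theorem card_dot_zero {k : ℕ} (w : Fin k → F) (hw : w ≠ 0) :
    Nat.card {x : Fin k → F // w ⬝ᵥ x = 0} = Fintype.card F ^ (k - 1) := by
  set B : Matrix (Fin 1) (Fin k) F := Matrix.of (fun _ => w) with hB
  have hcond : ∀ x : Fin k → F, (w ⬝ᵥ x = 0) ↔ (B *ᵥ x = 0) := by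
    intro x
    constructor
    · intro h; funext i; simpa [hB, Matrix.mulVec, dotProduct] using h
    · intro h
      have := congrFun h 0
      simpa [hB, Matrix.mulVec, dotProduct] using this
  have hrank : B.rank = 1 := by
    have hle : B.rank ≤ 1 := by simpa using B.rank_le_card_height
    have hne : B.rank ≠ 0 := by
      intro h0
      have : LinearMap.range B.mulVecLin = ⊥ := by
        have := Submodule.finrank_eq_zero (R := F) (S := LinearMap.range B.mulVecLin)
        rw [← this]
        exact h0
      rw [LinearMap.range_eq_bot] at this
      obtain ⟨j, hj⟩ : ∃ j, w j ≠ 0 := by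
        by_contra hc
        push_neg at hc
        exact hw (funext hc)
      have := congrFun (congrFun (congrArg DFunLike.coe this) (Pi.single j 1)) 0
      simp [hB, Matrix.mulVecLin, Matrix.mulVec, dotProduct, Pi.single_apply] at this
      exact hj this
    omega
  have : Nat.card {x : Fin k → F // w ⬝ᵥ x = 0}
      = Nat.card {x : Fin k → F // B *ᵥ x = 0} :=
    Nat.card_congr (Equiv.subtypeEquivRight hcond)
  rw [this, card_mulVec_ker, hrank]

theorem bzc_eq (q k r : ℕ) (hq : 1 ≤ q) (hr : r ≤ k) :
    q^(k-r) * q^k + (q^k - q^(k-r)) * q^(k-1) = bilinearZeroCount q k r := by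
  obtain ⟨d, rfl⟩ := Nat.exists_eq_add_of_le hr
  rcases r with _ | s
  · simp [bilinearZeroCount, two_mul, pow_add]
  · unfold bilinearZeroCount
    have h1 : s + 1 + d - (s+1) = d := by omega
    have h2 : s + 1 + d - 1 = s + d := by omega
    have h4 : (s+1) - 1 = s := by omega
    rw [h1, h2, h4, two_mul]
    have h5 : q^d ≤ q^(s+1+d) := Nat.pow_le_pow_right hq (by omega)
    have h6 : 1 ≤ q^(s+1) := Nat.one_le_pow _ _ hq
    zify [h5, h6]
    ring

theorem card_bilinear_zero {k : ℕ} (C : Matrix (Fin k) (Fin k) F) :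
    Nat.card {p : (Fin k → F) × (Fin k → F) // p.2 ⬝ᵥ (C *ᵥ p.1) = 0}
      = bilinearZeroCount (Fintype.card F) k C.rank := by
  classical
  set q := Fintype.card F with hq
  have hker : ∀ y : Fin k → F, (Matrix.vecMul y C = 0) ↔ (Cᵀ *ᵥ y = 0) := by
    intro y; rw [Matrix.mulVec_transpose]
  set S : Finset (Fin k → F) := Finset.univ.filter (fun y => Matrix.vecMul y C = 0) with hS
  have hScard : S.card = q ^ (k - C.rank) := by
    have : S.card = Nat.card {y : Fin k → F // Cᵀ *ᵥ y = 0} := by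
      rw [Nat.card_eq_fintype_card, Fintype.card_subtype]
      congr 1
      apply Finset.filter_congr
      intro y _
      simp [hker y]
    rw [this, card_mulVec_ker, Matrix.rank_transpose]
  have hcardfun : Fintype.card (Fin k → F) = q ^ k := by
    simp [hq]
  rw [Nat.card_eq_fintype_card, Fintype.card_subtype, Finset.card_filter,
    ← Finset.univ_product_univ, Finset.sum_product_right]
  have hinner : ∀ y : Fin k → F,
      (∑ x : Fin k → F, if (x, y).2 ⬝ᵥ (C *ᵥ (x, y).1) = 0 then 1 else 0)
        = if Matrix.vecMul y C = 0 then q ^ k else q ^ (k - 1) := by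
    intro y
    have hrw : ∀ x : Fin k → F, (y ⬝ᵥ (C *ᵥ x) = 0) ↔ ((Matrix.vecMul y C) ⬝ᵥ x = 0) := by
      intro x; rw [Matrix.dotProduct_mulVec]
    by_cases h : Matrix.vecMul y C = 0
    · simp only [if_pos h]
      have : ∀ x : Fin k → F, y ⬝ᵥ (C *ᵥ x) = 0 := by
        intro x; rw [hrw, h, zero_dotProduct]
      simp only [this, if_pos]
      simp [hcardfun]
    · simp only [if_neg h]
      have : (∑ x : Fin k → F, if y ⬝ᵥ (C *ᵥ x) = 0 then 1 else 0)
          = Nat.card {x : Fin k → F // (Matrix.vecMul y C) ⬝ᵥ x = 0} := by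
        rw [Nat.card_eq_fintype_card, Fintype.card_subtype, Finset.card_filter]
        exact Finset.sum_congr rfl fun x _ => by simp only [hrw]
      exact this.trans (card_dot_zero _ h)
  rw [Finset.sum_congr rfl (fun y _ => hinner y)]
  rw [Finset.sum_ite, Finset.sum_const, Finset.sum_const]
  have hfilterc : (Finset.univ.filter (fun y => ¬ Matrix.vecMul y C = 0)).card
      = q ^ k - q ^ (k - C.rank) := by
    rw [Finset.filter_not, Finset.card_sdiff_of_subset (Finset.filter_subset _ _)]
    rw [← hS, hScard, Finset.card_univ, hcardfun]
  rw [← hS, hScard, hfilterc, smul_eq_mul, smul_eq_mul]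
  exact bzc_eq q k C.rank (Fintype.card_pos) (C.rank_le_width)

end Counting

theorem card_permanent_zero_recursion (m : ℕ) (F : Type) [Field F] [Fintype F] :
    Nat.card {A : Matrix (Fin (m + 2)) (Fin (m + 2)) F // A.permanent = 0} =
      (Fintype.card F ^ ((m + 1) ^ 2) -
          Nat.card {A : Matrix (Fin (m + 1)) (Fin (m + 1)) F // A.permanent = 0}) *
        Fintype.card F ^ (2 * (m + 1)) +
      Fintype.card F *
        ∑ r ∈ Finset.range (m + 2),
          Nat.card {X : Matrix (Fin (m + 1)) (Fin (m + 1)) F //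
              X.permanent = 0 ∧ X.permCompound.rank = r} *
            bilinearZeroCount (Fintype.card F) (m + 1) r := by
  classical
  set q := Fintype.card F with hq
  -- Step 1: transfer to the block decomposition
  have step1 : Nat.card {A : Matrix (Fin (m+2)) (Fin (m+2)) F // A.permanent = 0}
      = Nat.card {t : Matrix (Fin (m+1)) (Fin (m+1)) F ×
            ((Fin (m+1) → F) × (Fin (m+1) → F) × F) //
          t.2.2.2 * t.1.permanent + t.2.2.1 ⬝ᵥ (t.1.permCompound *ᵥ t.2.1) = 0} := by
    apply Nat.card_congr
    refine Equiv.subtypeEquiv (blockEquiv (m+1) F) (fun A => ?_)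
    rw [keyExp A]
    exact Iff.rfl
  -- Sum over the scalar entry
  have hAsum : ∀ (p c : F), (∑ a : F, if a * p + c = 0 then (1:ℕ) else 0)
      = if p = 0 then (if c = 0 then q else 0) else 1 := by
    intro p c
    by_cases hp : p = 0
    · subst hp
      by_cases hc : c = 0 <;> simp [hc, hq, Finset.card_univ]
    · rw [if_neg hp]
      have hiff : ∀ a : F, (a * p + c = 0) ↔ (a = -c / p) := by
        intro a
        rw [add_eq_zero_iff_eq_neg, eq_div_iff hp]
      simp only [hiff]
      simp
  have step2 : Nat.card {t : Matrix (Fin (m+1)) (Fin (m+1)) F ×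
            ((Fin (m+1) → F) × (Fin (m+1) → F) × F) //
          t.2.2.2 * t.1.permanent + t.2.2.1 ⬝ᵥ (t.1.permCompound *ᵥ t.2.1) = 0}
      = ∑ X : Matrix (Fin (m+1)) (Fin (m+1)) F, ∑ x : Fin (m+1) → F, ∑ y : Fin (m+1) → F,
          (if X.permanent = 0 then (if y ⬝ᵥ (X.permCompound *ᵥ x) = 0 then q else 0)
            else 1) := by
    rw [Nat.card_eq_fintype_card, Fintype.card_subtype, Finset.card_filter]
    simp only [Fintype.sum_prod_type]
    refine Finset.sum_congr rfl fun X _ => Finset.sum_congr rfl fun x _ =>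
      Finset.sum_congr rfl fun y _ => ?_
    exact hAsum _ _
  -- the pair count for a fixed zero-permanent block
  have hpair : ∀ X : Matrix (Fin (m+1)) (Fin (m+1)) F,
      (∑ x : Fin (m+1) → F, ∑ y : Fin (m+1) → F,
          if y ⬝ᵥ (X.permCompound *ᵥ x) = 0 then q else 0)
        = q * bilinearZeroCount q (m+1) X.permCompound.rank := by
    intro X
    have h1 : (∑ x : Fin (m+1) → F, ∑ y : Fin (m+1) → F,
          if y ⬝ᵥ (X.permCompound *ᵥ x) = 0 then q else 0)
        = q * ∑ x : Fin (m+1) → F, ∑ y : Fin (m+1) → F,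
          (if y ⬝ᵥ (X.permCompound *ᵥ x) = 0 then 1 else 0) := by
      rw [Finset.mul_sum]
      refine Finset.sum_congr rfl fun x _ => ?_
      rw [Finset.mul_sum]
      refine Finset.sum_congr rfl fun y _ => ?_
      split <;> ring
    rw [h1]
    congr 1
    rw [← card_bilinear_zero (F := F) X.permCompound, Nat.card_eq_fintype_card,
      Fintype.card_subtype, Finset.card_filter]
    simp only [Fintype.sum_prod_type]
  have hcardfun : Fintype.card (Fin (m+1) → F) = q ^ (m+1) := by simp [hq]
  have hconst : ∀ X : Matrix (Fin (m+1)) (Fin (m+1)) F,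
      (∑ _x : Fin (m+1) → F, ∑ _y : Fin (m+1) → F, (1:ℕ)) = q ^ (2*(m+1)) := by
    intro X
    simp only [Finset.sum_const, Finset.card_univ, smul_eq_mul, mul_one, hcardfun]
    rw [← pow_add]
    congr 1
    omega
  -- collapse inner double sums
  have step3 : (∑ X : Matrix (Fin (m+1)) (Fin (m+1)) F, ∑ x : Fin (m+1) → F,
        ∑ y : Fin (m+1) → F,
          (if X.permanent = 0 then (if y ⬝ᵥ (X.permCompound *ᵥ x) = 0 then q else 0)
            else 1))
      = ∑ X : Matrix (Fin (m+1)) (Fin (m+1)) F,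
          (if X.permanent = 0 then q * bilinearZeroCount q (m+1) X.permCompound.rank
            else q ^ (2*(m+1))) := by
    refine Finset.sum_congr rfl fun X _ => ?_
    by_cases h : X.permanent = 0
    · simp only [if_pos h]
      exact hpair X
    · simp only [if_neg h]
      exact hconst X
  rw [step1, step2, step3, Finset.sum_ite, Finset.sum_const, smul_eq_mul]
  -- the nonzero-permanent part
  have hcardM : Fintype.card (Matrix (Fin (m+1)) (Fin (m+1)) F) = q ^ ((m+1)^2) := by
    have h0 : Fintype.card (Matrix (Fin (m+1)) (Fin (m+1)) F)
        = Fintype.card (Fin (m+1) → Fin (m+1) → F) :=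
      Fintype.card_congr (Matrix.of (m := Fin (m+1)) (n := Fin (m+1)) (α := F)).symm
    rw [h0]
    simp only [Fintype.card_fun, hcardfun, Fintype.card_fin, ← pow_mul]
    congr 1
    ring
  have hB : (Finset.univ.filter
        (fun X : Matrix (Fin (m+1)) (Fin (m+1)) F => ¬ X.permanent = 0)).card
      = q ^ ((m+1)^2)
        - Nat.card {A : Matrix (Fin (m+1)) (Fin (m+1)) F // A.permanent = 0} := by
    rw [Finset.filter_not, Finset.card_sdiff_of_subset (Finset.filter_subset _ _), Finset.card_univ,
      hcardM, Nat.card_eq_fintype_card, Fintype.card_subtype]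
  -- the zero-permanent part, fibered by rank
  have hA : (∑ X ∈ Finset.univ.filter
        (fun X : Matrix (Fin (m+1)) (Fin (m+1)) F => X.permanent = 0),
          q * bilinearZeroCount q (m+1) X.permCompound.rank)
      = q * ∑ r ∈ Finset.range (m + 2),
          Nat.card {X : Matrix (Fin (m + 1)) (Fin (m + 1)) F //
              X.permanent = 0 ∧ X.permCompound.rank = r} *
            bilinearZeroCount q (m + 1) r := by
    rw [← Finset.sum_fiberwise_of_maps_to
      (g := fun X : Matrix (Fin (m+1)) (Fin (m+1)) F => X.permCompound.rank)
      (t := Finset.range (m+2))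
      (fun X _ => Finset.mem_range.mpr (Nat.lt_succ_of_le X.permCompound.rank_le_width))]
    rw [Finset.mul_sum]
    refine Finset.sum_congr rfl fun r _ => ?_
    have heach : ∀ X ∈ (Finset.univ.filter
          (fun X : Matrix (Fin (m+1)) (Fin (m+1)) F => X.permanent = 0)).filter
          (fun X => X.permCompound.rank = r),
        q * bilinearZeroCount q (m+1) X.permCompound.rank
          = q * bilinearZeroCount q (m+1) r := by
      intro X hX
      simp only [Finset.mem_filter] at hX
      rw [hX.2]
    rw [Finset.sum_congr rfl heach, Finset.sum_const, smul_eq_mul]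
    rw [Finset.filter_filter, Nat.card_eq_fintype_card, Fintype.card_subtype]
    ring
  rw [hA, hB]
  ring
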